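/- Let n ≥ 2, let A = (a_{ij}) be a symmetric positive-definite real n×n matrix, let β be a nonzero linear form on ℝⁿ, and let P, Q, K ∈ ℝ. If P·α(y)⁴ + Q·β(y)·α(y)³ − 6K·β(y)²·α(y)² − 4K·β(y)³·α(y) − K·β(y)⁴ = 0 for all y ∈ ℝⁿ, where α(y) := √(a_{ij}yⁱyʲ), then K = 0, P = 0, and Q = 0. -/

import Mathlib

open scoped BigOperators

noncomputable section

/-- `α(y) = √(a_{ij} yⁱ yʲ)`. -/
def alphaOf {n : ℕ} (A : Matrix (Fin n) (Fin n) ℝ) (y : Fin n → ℝ) : ℝ :=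
  Real.sqrt (∑ i, ∑ j, A i j * y i * y j)

/-- `β(y) = b_i yⁱ`. -/
def betaOf {n : ℕ} (b : Fin n → ℝ) (y : Fin n → ℝ) : ℝ := ∑ i, b i * y i

/-- The algebraic splitting step for constant flag curvature: if
`P α⁴ + Q β α³ − 6K β² α² − 4K β³ α − K β⁴ = 0` identically, with `β ≠ 0`,
then `K = P = Q = 0`. -/
theorem stmt_11 {n : ℕ} (hn : 2 ≤ n) (A : Matrix (Fin n) (Fin n) ℝ)
    (hsym : A.IsSymm) (hpos : A.PosDef) (b : Fin n → ℝ) (hb : b ≠ 0)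
    (P Q K : ℝ)
    (h : ∀ y : Fin n → ℝ,
      P * (alphaOf A y)^4 + Q * betaOf b y * (alphaOf A y)^3
        - 6 * K * (betaOf b y)^2 * (alphaOf A y)^2
        - 4 * K * (betaOf b y)^3 * alphaOf A y
        - K * (betaOf b y)^4 = 0) :
    K = 0 ∧ P = 0 ∧ Q = 0 := by
  -- the quadratic form
  set q : (Fin n → ℝ) → ℝ := fun y => ∑ i, ∑ j, A i j * y i * y j with hq
  have hq_dot : ∀ y : Fin n → ℝ, q y = dotProduct y (A.mulVec y) := by
    intro y
    simp only [hq, dotProduct, Matrix.mulVec, Finset.mul_sum]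
    exact Finset.sum_congr rfl fun i _ => Finset.sum_congr rfl fun j _ => by ring
  have hq_pos : ∀ y : Fin n → ℝ, y ≠ 0 → 0 < q y := by
    intro y hy; rw [hq_dot]; simpa using hpos.dotProduct_mulVec_pos hy
  have hq_nonneg : ∀ y : Fin n → ℝ, 0 ≤ q y := by
    intro y
    by_cases hy : y = 0
    · subst hy; simp [hq]
    · exact (hq_pos y hy).le
  have halpha_sq : ∀ y : Fin n → ℝ, (alphaOf A y)^2 = q y := by
    intro y; rw [alphaOf, Real.sq_sqrt (hq_nonneg y)]
  have halpha_pos : ∀ y : Fin n → ℝ, y ≠ 0 → 0 < alphaOf A y := by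
    intro y hy; exact Real.sqrt_pos.mpr (hq_pos y hy)
  have halpha_neg : ∀ y : Fin n → ℝ, alphaOf A (-y) = alphaOf A y := by
    intro y
    unfold alphaOf
    congr 1
    exact Finset.sum_congr rfl fun i _ => Finset.sum_congr rfl fun j _ => by simp
  have hbeta_neg : ∀ y : Fin n → ℝ, betaOf b (-y) = - betaOf b y := by
    intro y; simp [betaOf, ← Finset.sum_neg_distrib]
  -- odd part
  have hodd : ∀ y : Fin n → ℝ, betaOf b y ≠ 0 →
      Q * (alphaOf A y)^2 = 4 * K * (betaOf b y)^2 := by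
    intro y hby
    have h1 := h y
    have h2 := h (-y)
    rw [halpha_neg, hbeta_neg] at h2
    have hyne : y ≠ 0 := by
      intro hy0; apply hby; simp [hy0, betaOf]
    have hα := halpha_pos y hyne
    have key : betaOf b y * alphaOf A y *
        (Q * (alphaOf A y)^2 - 4 * K * (betaOf b y)^2) = 0 := by nlinarith [h1, h2]
    have := mul_ne_zero hby (ne_of_gt hα)
    have : Q * (alphaOf A y)^2 - 4 * K * (betaOf b y)^2 = 0 := by
      rcases mul_eq_zero.mp key with h' | h'
      · exact absurd h' this
      · exact h'
    linarith
  -- beta b > 0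
  have hbb : betaOf b b = ∑ i, (b i)^2 := by
    simp [betaOf, sq]
  have hbbpos : 0 < betaOf b b := by
    rw [hbb]
    have : ∃ i, b i ≠ 0 := by
      by_contra h'
      push_neg at h'
      exact hb (funext h')
    obtain ⟨i, hi⟩ := this
    exact Finset.sum_pos' (fun j _ => sq_nonneg _) ⟨i, Finset.mem_univ i, by positivity⟩
  -- kernel vector z
  obtain ⟨z, hz0, hzb⟩ : ∃ z : Fin n → ℝ, z ≠ 0 ∧ betaOf b z = 0 := by
    let f : (Fin n → ℝ) →ₗ[ℝ] ℝ :=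
      { toFun := betaOf b
        map_add' := by intro x y; simp [betaOf, Finset.sum_add_distrib, mul_add]
        map_smul' := by
          intro c x; simp [betaOf, Finset.mul_sum]
          exact Finset.sum_congr rfl fun i _ => by ring }
    by_contra hcon
    push_neg at hcon
    have hker : LinearMap.ker f = ⊥ := by
      rw [LinearMap.ker_eq_bot']
      intro m hm
      by_contra hm0
      exact (hcon m hm0) hm
    have hinj : Function.Injective f := LinearMap.ker_eq_bot.mp hker
    have := LinearMap.finrank_le_finrank_of_injective hinj
    simp [Module.finrank_fin_fun] at this
    omega
  -- beta(b ± z) = beta b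
  have hbadd : ∀ s : ℝ, betaOf b (fun i => b i + s * z i) = betaOf b b := by
    intro s
    have : betaOf b (fun i => b i + s * z i) = betaOf b b + s * betaOf b z := by
      simp [betaOf, Finset.sum_add_distrib, mul_add, Finset.mul_sum]
      exact Finset.sum_congr rfl fun i _ => by ring
    rw [this, hzb]; ring
  -- q parallelogram
  have hpar : q (fun i => b i + 1 * z i) + q (fun i => b i + (-1) * z i) = 2 * q b + 2 * q z := by
    simp only [hq]
    rw [← Finset.sum_add_distrib]
    rw [show (2:ℝ) * (∑ i, ∑ j, A i j * b i * b j) + 2 * (∑ i, ∑ j, A i j * z i * z j)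
        = ∑ i, (2 * (∑ j, A i j * b i * b j) + 2 * (∑ j, A i j * z i * z j)) by
      rw [Finset.sum_add_distrib, Finset.mul_sum, Finset.mul_sum]]
    refine Finset.sum_congr rfl fun i _ => ?_
    rw [← Finset.sum_add_distrib, Finset.mul_sum, Finset.mul_sum, ← Finset.sum_add_distrib]
    exact Finset.sum_congr rfl fun j _ => by ring
  -- apply hodd at b, b+z, b-z
  set c := betaOf b b with hc
  have hcne : c ≠ 0 := ne_of_gt hbbpos
  have e0 : Q * q b = 4 * K * c^2 := by
    have := hodd b hcne; rwa [halpha_sq] at this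
  have e1 : Q * q (fun i => b i + 1 * z i) = 4 * K * c^2 := by
    have hb1 : betaOf b (fun i => b i + 1 * z i) = c := hbadd 1
    have := hodd _ (hb1 ▸ hcne)
    rwa [halpha_sq, hb1] at this
  have e2 : Q * q (fun i => b i + (-1) * z i) = 4 * K * c^2 := by
    have hb2 : betaOf b (fun i => b i + (-1) * z i) = c := hbadd (-1)
    have := hodd _ (hb2 ▸ hcne)
    rwa [halpha_sq, hb2] at this
  have hqz : 0 < q z := hq_pos z hz0
  have hQ : Q = 0 := by nlinarith [hpar, e0, e1, e2]
  have hK : K = 0 := by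
    have : (0:ℝ) = 4 * K * c^2 := by rw [← e0, hQ]; ring
    have hc2 : 0 < c^2 := by positivity
    nlinarith
  refine ⟨hK, ?_, hQ⟩
  have hP := h b
  rw [hQ, hK] at hP
  have hαb : 0 < alphaOf A b := halpha_pos b hb
  nlinarith [hP, pow_pos hαb 4]
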